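/- Let n ≥ 1 and let G be a tree (a connected acyclic simple graph) on Fin n. Then the distance matrix of G is a spherical Euclidean distance matrix: there exist points p_1, …, p_n in the Euclidean space ℝ^n, a center c ∈ ℝ^n, and a radius r ≥ 0 such that dist_G(i, j) = ‖p_i − p_j‖² for all i, j, and ‖p_i − c‖ = r for all i. -/

import Mathlib

open Matrix Finset BigOperators


open Finset
namespace TreeEDMAux

variable {V : Type*} [DecidableEq V] [Fintype V] {G : SimpleGraph V}

noncomputable def S (G : SimpleGraph V) [DecidableEq V] [Fintype V] (root i : V) : Finset V :=
  univ.filter (fun v => v ≠ root ∧ G.dist root v + G.dist v i = G.dist root i)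

lemma mem_S {G : SimpleGraph V} {root i v : V} :
    v ∈ S G root i ↔ v ≠ root ∧ G.dist root v + G.dist v i = G.dist root i := by
  simp [S]

lemma geo_support' (hT : G.IsTree) {a b v : V} (W : G.Walk a b)
    (hW : W.length = G.dist a b) (hv : v ∈ W.support) :
    G.dist a v + G.dist v b = G.dist a b ∧
      (W.takeUntil v hv).length = G.dist a v ∧
      (W.dropUntil v hv).length = G.dist v b := by
  have hlen : (W.takeUntil v hv).length + (W.dropUntil v hv).length = W.length := by
    rw [← SimpleGraph.Walk.length_append, W.take_spec hv]
  have h1 := SimpleGraph.dist_le (W.takeUntil v hv)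
  have h2 := SimpleGraph.dist_le (W.dropUntil v hv)
  have h3 := hT.isConnected.dist_triangle (u := a) (v := v) (w := b)
  omega

omit [DecidableEq V] [Fintype V] in
lemma path_length' (hT : G.IsTree) {a b : V} (P : G.Walk a b) (hP : P.IsPath) :
    P.length = G.dist a b := by
  obtain ⟨Q, hQ, hl⟩ := hT.isConnected.exists_path_of_dist a b
  rw [(hT.existsUnique_path a b).unique hP hQ, hl]

lemma mem_path_support_iff' (hT : G.IsTree) {a b v : V} (P : G.Walk a b) (hP : P.IsPath) :
    v ∈ P.support ↔ G.dist a v + G.dist v b = G.dist a b := by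
  constructor
  · intro hv
    exact (geo_support' hT P (path_length' hT P hP) hv).1
  · intro hseg
    obtain ⟨t, ht, hlt⟩ := hT.isConnected.exists_path_of_dist a v
    obtain ⟨s, hs, hls⟩ := hT.isConnected.exists_path_of_dist v b
    have hW : (t.append s).IsPath := by
      apply SimpleGraph.Walk.isPath_of_length_eq_dist
      rw [SimpleGraph.Walk.length_append, hlt, hls, hseg]
    have hPW := (hT.existsUnique_path a b).unique hP hW
    rw [hPW, SimpleGraph.Walk.mem_support_append_iff]
    exact Or.inr s.start_mem_support

omit [DecidableEq V] [Fintype V] in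
lemma isPath_append' {a m b : V} {t : G.Walk a m} {s : G.Walk m b}
    (ht : t.IsPath) (hs : s.IsPath)
    (hmeet : ∀ x, x ∈ t.support → x ∈ s.support → x = m) : (t.append s).IsPath := by
  rw [SimpleGraph.Walk.isPath_def, SimpleGraph.Walk.support_append, List.nodup_append]
  have hcons : s.support = m :: s.support.tail := s.support_eq_cons
  have hnds : (m :: s.support.tail).Nodup := hcons ▸ hs.support_nodup
  refine ⟨ht.support_nodup, hnds.of_cons, fun x hxt y hxs' hxy => ?_⟩
  subst hxy
  have hxs : x ∈ s.support := by rw [hcons]; exact List.mem_cons_of_mem _ hxs'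
  have := hmeet x hxt hxs
  subst this
  exact (List.nodup_cons.1 hnds).1 hxs'

lemma card_S (hT : G.IsTree) (root i : V) : (S G root i).card = G.dist root i := by
  obtain ⟨P, hP, hl⟩ := hT.isConnected.exists_path_of_dist root i
  have hSP : S G root i = P.support.toFinset.erase root := by
    ext v
    simp only [mem_S, Finset.mem_erase, List.mem_toFinset,
      mem_path_support_iff' hT P hP]
  rw [hSP, Finset.card_erase_of_mem (List.mem_toFinset.2 P.start_mem_support),
    List.toFinset_card_of_nodup hP.support_nodup, SimpleGraph.Walk.length_support, hl]
  omega

lemma meet (hT : G.IsTree) (root i j : V) :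
    ∃ m : V, G.dist root m + G.dist m i = G.dist root i ∧
      G.dist root m + G.dist m j = G.dist root j ∧
      G.dist i j = G.dist i m + G.dist m j ∧
      S G root i ∩ S G root j = S G root m := by
  have hc := hT.isConnected
  have tri : ∀ a b c : V, G.dist a c ≤ G.dist a b + G.dist b c := fun a b c => hc.dist_triangle
  have comm : ∀ a b : V, G.dist a b = G.dist b a := fun a b => SimpleGraph.dist_comm ..
  set T : Finset V := univ.filter
    (fun v => G.dist root v + G.dist v i = G.dist root i ∧
      G.dist root v + G.dist v j = G.dist root j) with hTdef
  have hroot : root ∈ T := by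
    simp [hTdef, SimpleGraph.dist_self]
  obtain ⟨m, hmT, hmax⟩ := T.exists_max_image (G.dist root) ⟨root, hroot⟩
  rw [hTdef, mem_filter] at hmT
  obtain ⟨-, hmi, hmj⟩ := hmT
  have hmax' : ∀ v, G.dist root v + G.dist v i = G.dist root i →
      G.dist root v + G.dist v j = G.dist root j → G.dist root v ≤ G.dist root m := by
    intro v h1 h2
    exact hmax v (by rw [hTdef, mem_filter]; exact ⟨mem_univ v, h1, h2⟩)
  refine ⟨m, hmi, hmj, ?_, ?_⟩
  · obtain ⟨t, ht, hlt⟩ := hc.exists_path_of_dist i m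
    obtain ⟨s, hs, hls⟩ := hc.exists_path_of_dist m j
    have hmeet : ∀ x, x ∈ t.support → x ∈ s.support → x = m := by
      intro x hxt hxs
      have h1 := (geo_support' hT t hlt hxt).1
      have h2 := (geo_support' hT s hls hxs).1
      have c1 := comm i x
      have c2 := comm x m
      have c3 := comm i m
      have t1 := tri root m x
      have t2 := tri root x i
      have t3 := tri root x j
      have hsegi : G.dist root x + G.dist x i = G.dist root i := by omega
      have hsegj : G.dist root x + G.dist x j = G.dist root j := by omega
      have hle := hmax' x hsegi hsegj
      have hx0 : G.dist m x = 0 := by omega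
      exact (hc.dist_eq_zero_iff.1 hx0).symm
    have hW : (t.append s).IsPath := isPath_append' ht hs hmeet
    rw [← path_length' hT (t.append s) hW, SimpleGraph.Walk.length_append, hlt, hls]
  · ext v
    simp only [Finset.mem_inter, mem_S]
    constructor
    · rintro ⟨⟨hvr, hvi⟩, -, hvj⟩
      refine ⟨hvr, ?_⟩
      obtain ⟨P, hP, hl⟩ := hc.exists_path_of_dist root i
      have hvP : v ∈ P.support := (mem_path_support_iff' hT P hP).2 hvi
      have hmP : m ∈ P.support := (mem_path_support_iff' hT P hP).2 hmi
      have gs := geo_support' hT P hl hmP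
      rw [← P.take_spec hmP, SimpleGraph.Walk.mem_support_append_iff] at hvP
      have hle := hmax' v hvi hvj
      rcases hvP with hvtake | hvdrop
      · exact (geo_support' hT (P.takeUntil m hmP) gs.2.1 hvtake).1
      · have h2 := (geo_support' hT (P.dropUntil m hmP) gs.2.2 hvdrop).1
        have c1 := comm m v
        have hv0 : G.dist v m = 0 := by omega
        have : v = m := hc.dist_eq_zero_iff.1 hv0
        subst this
        simp [SimpleGraph.dist_self]
    · rintro ⟨hvr, hvm⟩
      have t1 := tri root v i
      have t2 := tri root v j
      have t3 := tri v m i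
      have t4 := tri v m j
      have c1 := comm i v
      have c2 := comm j v
      exact ⟨⟨hvr, by omega⟩, hvr, by omega⟩

end TreeEDMAux



theorem tree_distance_matrix_spherical_EDM_aux {n : ℕ} (hn : 1 ≤ n)
    (G : SimpleGraph (Fin n)) (hT : G.IsTree) :
    ∃ (p : Fin n → EuclideanSpace ℝ (Fin n)) (c : EuclideanSpace ℝ (Fin n)) (r : ℝ),
      0 ≤ r ∧ (∀ i j, (G.dist i j : ℝ) = ‖p i - p j‖ ^ 2) ∧ (∀ i, ‖p i - c‖ = r) := by
  classical
  set root : Fin n := ⟨0, hn⟩ with hroot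
  set S : Fin n → Finset (Fin n) := fun i => TreeEDMAux.S G root i with hS
  set p : Fin n → EuclideanSpace ℝ (Fin n) :=
    fun i => (WithLp.equiv 2 (Fin n → ℝ)).symm (fun v => if v ∈ S i then 1 else 0) with hp
  set c : EuclideanSpace ℝ (Fin n) := (WithLp.equiv 2 (Fin n → ℝ)).symm (fun _ => 1/2) with hc
  have normsq : ∀ x : EuclideanSpace ℝ (Fin n), ‖x‖^2 = ∑ v, (x v)^2 := fun x => by
    rw [EuclideanSpace.norm_eq, Real.sq_sqrt (Finset.sum_nonneg fun v _ => sq_nonneg _)]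
    simp [Real.norm_eq_abs, sq_abs]
  have papp : ∀ i v, p i v = if v ∈ S i then (1:ℝ) else 0 := fun i v => by
    rw [hp]; rfl
  have capp : ∀ v, c v = 1/2 := fun v => by
    rw [hc]; rfl
  have sb : ∀ s : Finset (Fin n), ∑ v, (if v ∈ s then (1:ℝ) else 0) = s.card := by
    intro s
    rw [Finset.sum_ite_mem, Finset.univ_inter, Finset.sum_const, nsmul_eq_mul, mul_one]
  refine ⟨p, c, Real.sqrt ((n:ℝ)/4), Real.sqrt_nonneg _, ?_, ?_⟩
  · intro i j
    have expand : ∀ v, (p i v - p j v)^2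
        = (if v ∈ S i then (1:ℝ) else 0) + (if v ∈ S j then (1:ℝ) else 0)
          - 2 * (if v ∈ S i ∩ S j then (1:ℝ) else 0) := by
      intro v
      rw [papp, papp]
      by_cases h1 : v ∈ S i <;> by_cases h2 : v ∈ S j <;>
        simp [Finset.mem_inter, h1, h2] <;> norm_num
    have hsum : ‖p i - p j‖^2
        = ((S i).card : ℝ) + ((S j).card : ℝ) - 2 * ((S i ∩ S j).card : ℝ) := by
      rw [normsq]
      calc ∑ v, ((p i - p j) v)^2 = ∑ v, (p i v - p j v)^2 := by
            simp [PiLp.sub_apply]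
        _ = ∑ v, ((if v ∈ S i then (1:ℝ) else 0) + (if v ∈ S j then (1:ℝ) else 0)
              - 2 * (if v ∈ S i ∩ S j then (1:ℝ) else 0)) := by
            exact Finset.sum_congr rfl fun v _ => expand v
        _ = ((S i).card : ℝ) + ((S j).card : ℝ) - 2 * ((S i ∩ S j).card : ℝ) := by
            rw [Finset.sum_sub_distrib, Finset.sum_add_distrib, ← Finset.mul_sum, sb, sb, sb]
    rw [hsum]
    obtain ⟨m, hmi, hmj, hij, hcap⟩ := TreeEDMAux.meet hT root i j
    have e1 := TreeEDMAux.card_S hT root i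
    have e2 := TreeEDMAux.card_S hT root j
    have e3 := TreeEDMAux.card_S hT root m
    have hcap' : (S i ∩ S j).card = G.dist root m := by rw [hS]; simp only; rw [hcap, e3]
    have comm : G.dist i m = G.dist m i := SimpleGraph.dist_comm ..
    have : G.dist i j + 2 * G.dist root m = G.dist root i + G.dist root j := by omega
    rw [hS] at *
    simp only at e1 e2 hcap' ⊢
    rw [e1, e2, hcap']
    have hR : (G.dist i j : ℝ) + 2 * (G.dist root m : ℝ)
        = (G.dist root i : ℝ) + (G.dist root j : ℝ) := by exact_mod_cast this
    push_cast
    linarith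
  · intro i
    have hsq : ‖p i - c‖^2 = (n:ℝ)/4 := by
      rw [normsq]
      have : ∀ v : Fin n, ((p i - c) v)^2 = 1/4 := by
        intro v
        rw [PiLp.sub_apply, papp, capp]
        by_cases h : v ∈ S i <;> simp [h] <;> norm_num
      rw [Finset.sum_congr rfl fun v _ => this v, Finset.sum_const, Finset.card_univ,
        Fintype.card_fin, nsmul_eq_mul]
      ring
    rw [← hsq, Real.sqrt_sq (norm_nonneg _)]


/-- The distance matrix of a tree is a spherical Euclidean distance matrix: there are
points `p i` in `ℝ^n`, all lying on a common sphere of center `c` and radius `r`,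
such that the graph distance between `i` and `j` equals the squared Euclidean distance
between `p i` and `p j`. -/
theorem tree_distance_matrix_spherical_EDM {n : ℕ} (hn : 1 ≤ n)
    (G : SimpleGraph (Fin n)) (hT : G.IsTree) :
    ∃ (p : Fin n → EuclideanSpace ℝ (Fin n)) (c : EuclideanSpace ℝ (Fin n)) (r : ℝ),
      0 ≤ r ∧ (∀ i j, (G.dist i j : ℝ) = ‖p i - p j‖ ^ 2) ∧ (∀ i, ‖p i - c‖ = r) :=
  tree_distance_matrix_spherical_EDM_aux hn G hT
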